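/- Suboptimality from incomplete rewards (policy-improvement core): let R_train, R_missing ∈ C(S×A) and set R_true = R_train + R_missing. Let π be a policy such that V^π_{R_train}(s) = max_{a∈A} Q*_{R_train}(s,a) for all s ∈ S (so π is optimal for R_train). Suppose there exist s₀ ∈ S and a₂ ∈ A such that (i) a₂ ∈ argmax_{a∈A} Q*_{R_train}(s₀,a), and (ii) Q^π_{R_missing}(s₀,a₂) > V^π_{R_missing}(s₀). Then Q^π_{R_true}(s₀,a₂) > V^π_{R_true}(s₀); in particular π is not an optimal policy for R_true. -/
import Mathlib


open MeasureTheory ProbabilityTheory Filter Topology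

/-- Suboptimality from incomplete rewards (policy-improvement core):
with `R_true = R_train + R_missing`, if the policy `pol` is optimal for `R_train`
(i.e. `V^π_{R_train}(s) = max_a Q*_{R_train}(s,a)` for all `s`), `a₂` maximizes
`Q*_{R_train}(s₀,·)`, and `Q^π_{R_missing}(s₀,a₂) > V^π_{R_missing}(s₀)`, then
`Q^π_{R_true}(s₀,a₂) > V^π_{R_true}(s₀)`; in particular `pol` is not optimal for
`R_true`. -/
theorem suboptimality_from_incomplete_rewards
    {S A : Type*}
    [MetricSpace S] [CompactSpace S] [MeasurableSpace S] [BorelSpace S]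
    [MetricSpace A] [CompactSpace A] [Nonempty A] [MeasurableSpace A] [BorelSpace A]
    (γ : ℝ) (hγ0 : 0 ≤ γ) (hγ1 : γ < 1)
    (P : Kernel (S × A) S) [IsMarkovKernel P]
    (hFeller : ∀ f : C(S, ℝ), Continuous fun p : S × A => ∫ s', f s' ∂(P p))
    (pol : Kernel S A) [IsMarkovKernel pol]
    (hpolFeller : ∀ g : C(A, ℝ), Continuous fun s : S => ∫ a, g a ∂(pol s))
    (Rtrain Rmiss : C(S × A, ℝ))
    -- optimal Q-function for the training reward
    (Qstar : C(S × A, ℝ))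
    (hQstar : ∀ p : S × A,
      Qstar p = Rtrain p + γ * ∫ s', (⨆ a' : A, Qstar (s', a')) ∂(P p))
    -- policy evaluation value functions of `pol` under the three rewards
    (Vtrain Vmiss Vtrue : C(S, ℝ))
    (hVtrain : ∀ s : S, Vtrain s =
      ∫ a, (Rtrain (s, a) + γ * ∫ s', Vtrain s' ∂(P (s, a))) ∂(pol s))
    (hVmiss : ∀ s : S, Vmiss s =
      ∫ a, (Rmiss (s, a) + γ * ∫ s', Vmiss s' ∂(P (s, a))) ∂(pol s))
    (hVtrue : ∀ s : S, Vtrue s =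
      ∫ a, ((Rtrain (s, a) + Rmiss (s, a)) + γ * ∫ s', Vtrue s' ∂(P (s, a))) ∂(pol s))
    -- `pol` is optimal for the training reward
    (hopt : ∀ s : S, Vtrain s = ⨆ a : A, Qstar (s, a))
    -- action-value functions of `pol` under the missing and true rewards
    (Qmiss Qtrue : S × A → ℝ)
    (hQmiss : ∀ p : S × A, Qmiss p = Rmiss p + γ * ∫ s', Vmiss s' ∂(P p))
    (hQtrue : ∀ p : S × A, Qtrue p = (Rtrain p + Rmiss p) + γ * ∫ s', Vtrue s' ∂(P p))
    (s₀ : S) (a₂ : A)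
    -- (i) `a₂` is optimal under the training reward
    (ha₂ : ∀ b : A, Qstar (s₀, b) ≤ Qstar (s₀, a₂))
    -- (ii) positive advantage for the missing reward
    (hadv : Vmiss s₀ < Qmiss (s₀, a₂))
    -- optimal Q-function for the true reward
    (QstarTrue : C(S × A, ℝ))
    (hQstarTrue : ∀ p : S × A,
      QstarTrue p = (Rtrain p + Rmiss p) + γ * ∫ s', (⨆ a' : A, QstarTrue (s', a')) ∂(P p)) :
    Vtrue s₀ < Qtrue (s₀, a₂) ∧ ¬ (∀ s : S, Vtrue s = ⨆ a : A, QstarTrue (s, a)) := by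
  have hNS : Nonempty S := ⟨s₀⟩
  -- integrability of continuous functions on compact spaces
  have hintS : ∀ (g : S → ℝ), Continuous g → ∀ (μ : Measure S) [IsFiniteMeasure μ],
      Integrable g μ := by
    intro g hg μ _
    exact hg.integrable_of_hasCompactSupport (HasCompactSupport.of_compactSpace g)
  have hintA : ∀ (g : A → ℝ), Continuous g → ∀ (μ : Measure A) [IsFiniteMeasure μ],
      Integrable g μ := by
    intro g hg μ _
    exact hg.integrable_of_hasCompactSupport (HasCompactSupport.of_compactSpace g)
  -- the difference function
  set f : S → ℝ := fun s => Vtrue s - Vtrain s - Vmiss s with hfdef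
  have hfc : Continuous f := by
    exact (Vtrue.continuous.sub Vtrain.continuous).sub Vmiss.continuous
  -- key fixed point identity for f
  have hkey : ∀ s : S, f s = γ * ∫ a, (∫ s', f s' ∂(P (s, a))) ∂(pol s) := by
    intro s
    have hVi : ∀ p : S × A, (∫ s', Vtrue s' ∂(P p))
        = (∫ s', Vtrain s' ∂(P p)) + (∫ s', Vmiss s' ∂(P p)) + (∫ s', f s' ∂(P p)) := by
      intro p
      have h1 : Integrable (fun s' => Vtrain s') (P p) := hintS _ Vtrain.continuous _
      have h2 : Integrable (fun s' => Vmiss s') (P p) := hintS _ Vmiss.continuous _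
      have h3 : Integrable (fun s' => f s') (P p) := hintS _ hfc _
      have h12 : Integrable (fun s' => Vtrain s' + Vmiss s') (P p) := h1.add h2
      have : (fun s' : S => Vtrue s') = fun s' => Vtrain s' + Vmiss s' + f s' := by
        funext s'; simp only [hfdef]; ring
      rw [this, integral_add h12 h3, integral_add h1 h2]
    -- continuity of the three action integrands
    have hc1 : Continuous fun a : A => Rtrain (s, a) + γ * ∫ s', Vtrain s' ∂(P (s, a)) := by
      exact (Rtrain.continuous.comp (Continuous.prodMk_right s)).add
        (continuous_const.mul ((hFeller Vtrain).comp (Continuous.prodMk_right s)))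
    have hc2 : Continuous fun a : A => Rmiss (s, a) + γ * ∫ s', Vmiss s' ∂(P (s, a)) := by
      exact (Rmiss.continuous.comp (Continuous.prodMk_right s)).add
        (continuous_const.mul ((hFeller Vmiss).comp (Continuous.prodMk_right s)))
    have hc3 : Continuous fun a : A => γ * ∫ s', f s' ∂(P (s, a)) := by
      exact continuous_const.mul
        ((hFeller ⟨f, hfc⟩).comp (Continuous.prodMk_right s))
    have hi1 := hintA _ hc1 (pol s)
    have hi2 := hintA _ hc2 (pol s)
    have hi3 := hintA _ hc3 (pol s)
    have hsplit : Vtrue s = (∫ a, (Rtrain (s, a) + γ * ∫ s', Vtrain s' ∂(P (s, a))) ∂(pol s))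
        + (∫ a, (Rmiss (s, a) + γ * ∫ s', Vmiss s' ∂(P (s, a))) ∂(pol s))
        + (∫ a, (γ * ∫ s', f s' ∂(P (s, a))) ∂(pol s)) := by
      have hi12 : Integrable (fun a => (Rtrain (s, a) + γ * ∫ s', Vtrain s' ∂(P (s, a)))
          + (Rmiss (s, a) + γ * ∫ s', Vmiss s' ∂(P (s, a)))) (pol s) := hi1.add hi2
      rw [hVtrue s, ← integral_add hi1 hi2, ← integral_add hi12 hi3]
      refine integral_congr_ae (Filter.Eventually.of_forall fun a => ?_)
      beta_reduce
      rw [hVi (s, a)]; ring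
    have : f s = ∫ a, (γ * ∫ s', f s' ∂(P (s, a))) ∂(pol s) := by
      simp only [hfdef]
      rw [hsplit, ← hVtrain s, ← hVmiss s]; ring
    rw [this, ← integral_const_mul]
  -- f is identically zero via contraction
  have hf0 : ∀ s : S, f s = 0 := by
    obtain ⟨sm, -, hsm⟩ := isCompact_univ.exists_isMaxOn (Set.univ_nonempty)
      (continuous_abs.comp hfc).continuousOn
    set M : ℝ := |f sm| with hM
    have hMnonneg : 0 ≤ M := abs_nonneg _
    have hbound : ∀ s : S, |f s| ≤ γ * M := by
      intro s
      rw [hkey s, abs_mul, abs_of_nonneg hγ0]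
      refine mul_le_mul_of_nonneg_left ?_ hγ0
      have houter : ‖∫ a, (∫ s', f s' ∂(P (s, a))) ∂(pol s)‖ ≤ M * ((pol s) Set.univ).toReal := by
        refine norm_integral_le_of_norm_le_const (Filter.Eventually.of_forall fun a => ?_)
        have hinner : ‖∫ s', f s' ∂(P (s, a))‖ ≤ M * ((P (s, a)) Set.univ).toReal := by
          refine norm_integral_le_of_norm_le_const (Filter.Eventually.of_forall fun s' => ?_)
          simpa [Real.norm_eq_abs] using hsm (Set.mem_univ s')
        simpa [Real.norm_eq_abs] using hinner
      simpa [Real.norm_eq_abs] using houter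
    have : M ≤ γ * M := by simpa using hbound sm
    have hM0 : M = 0 := by nlinarith
    intro s
    have := hbound s
    rw [hM0] at this
    have : |f s| ≤ 0 := by linarith
    exact abs_eq_zero.mp (le_antisymm this (abs_nonneg _))
  have hVsum : ∀ s : S, Vtrue s = Vtrain s + Vmiss s := by
    intro s
    have := hf0 s
    simp only [hfdef] at this
    linarith
  -- Qstar coincides with Rtrain + γ ∫ Vtrain
  have hQstar' : ∀ p : S × A, Qstar p = Rtrain p + γ * ∫ s', Vtrain s' ∂(P p) := by
    intro p
    rw [hQstar p]
    congr 1
    congr 1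
    exact integral_congr_ae (Filter.Eventually.of_forall fun s' => (hopt s').symm)
  -- split Qtrue
  have hQtrue' : ∀ p : S × A, Qtrue p = Qstar p + Qmiss p := by
    intro p
    rw [hQtrue p, hQstar' p, hQmiss p]
    have h1 : Integrable (fun s' => Vtrain s') (P p) := hintS _ Vtrain.continuous _
    have h2 : Integrable (fun s' => Vmiss s') (P p) := hintS _ Vmiss.continuous _
    have : (∫ s', Vtrue s' ∂(P p)) = (∫ s', Vtrain s' ∂(P p)) + ∫ s', Vmiss s' ∂(P p) := by
      rw [← integral_add h1 h2]
      exact integral_congr_ae (Filter.Eventually.of_forall fun s' => hVsum s')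
    rw [this]; ring
  -- part 1
  have hpart1 : Vtrue s₀ < Qtrue (s₀, a₂) := by
    have h1 : Vtrain s₀ ≤ Qstar (s₀, a₂) := by
      rw [hopt s₀]
      exact ciSup_le ha₂
    rw [hVsum s₀, hQtrue' (s₀, a₂)]
    have := hadv
    linarith
  refine ⟨hpart1, fun hcontra => ?_⟩
  have hQQ : Qtrue (s₀, a₂) = QstarTrue (s₀, a₂) := by
    rw [hQtrue (s₀, a₂), hQstarTrue (s₀, a₂)]
    congr 2
    exact integral_congr_ae (Filter.Eventually.of_forall fun s' => hcontra s')
  have hbdd : BddAbove (Set.range fun a : A => QstarTrue (s₀, a)) :=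
    (isCompact_range (QstarTrue.continuous.comp (Continuous.prodMk_right s₀))).bddAbove
  have : Qtrue (s₀, a₂) ≤ Vtrue s₀ := by
    rw [hQQ, hcontra s₀]
    exact le_ciSup hbdd a₂
  linarith
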